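/- (Monotonicity enabling existence, case d_3 = d_2 > d_1.) Let z_1, z_2, z_3 be vertices of a nondegenerate triangle, 0 < d_1 < d_2 = d_3. For k ∈ [1, d_2/d_1) define D(k) = |z_23 · (b_13(k) − (z_2+z_3)/2)|/‖z_23‖ − r_13(k), where z_23 = z_2 − z_3 and b_13(k), r_13(k) are the Apollonius center and radius for ratio k d_1 : d_3 on segment z_1 z_3. If D(1) > 0, then there exists k ∈ (1, d_2/d_1) with D(k) ≤ 0; consequently for this k there exists x with ‖x − z_3‖ d_2 = ‖x − z_2‖ d_3 and ‖x − z_1‖ d_3 = ‖x − z_3‖ k d_1. -/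

import Mathlib

open scoped RealInnerProductSpace

private theorem eq_of_sq_eq_sq' (a b : ℝ) (ha : 0 ≤ a) (hb : 0 ≤ b) (h : a ^ 2 = b ^ 2) :
    a = b := by
  nlinarith [sq_nonneg (a - b), sq_nonneg (a + b)]

/-- The fundamental algebraic identity for the Apollonius circle with center
`b = (c/(c-a)) • z₁ + (a/(a-c)) • z₃`. -/
private theorem apollo_id (z₁ z₃ x : EuclideanSpace ℝ (Fin 2)) (a c : ℝ) (hs : c - a ≠ 0) :
    (c - a) * ‖x - ((c / (c - a)) • z₁ + (a / (a - c)) • z₃)‖ ^ 2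
      = c * ‖x - z₁‖ ^ 2 - a * ‖x - z₃‖ ^ 2 + (a * c / (c - a)) * ‖z₁ - z₃‖ ^ 2 := by
  have hs' : a - c ≠ 0 := fun h => hs (by linarith [sub_eq_zero.1 h])
  simp only [← real_inner_self_eq_norm_sq]
  simp only [inner_sub_left, inner_sub_right, inner_add_left, inner_add_right,
    inner_smul_left, inner_smul_right, RCLike.conj_to_real, conj_trivial]
  rw [real_inner_comm z₁ x, real_inner_comm z₃ x, real_inner_comm z₃ z₁]
  field_simp
  ring

/-- Strict Cauchy–Schwarz for the sides of a nondegenerate triangle. -/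
private theorem strictCS (z₁ z₂ z₃ : EuclideanSpace ℝ (Fin 2))
    (htri : AffineIndependent ℝ ![z₁, z₂, z₃]) :
    |⟪z₂ - z₃, z₁ - z₃⟫| < ‖z₂ - z₃‖ * ‖z₁ - z₃‖ := by
  have h1 : z₁ - z₃ ≠ 0 := by
    have := htri.injective.ne (a₁ := 0) (a₂ := 2) (by decide)
    simpa [sub_eq_zero] using this
  have h2 : z₂ - z₃ ≠ 0 := by
    have := htri.injective.ne (a₁ := 1) (a₂ := 2) (by decide)
    simpa [sub_eq_zero] using this
  rcases lt_or_eq_of_le (abs_real_inner_le_norm (z₂ - z₃) (z₁ - z₃)) with h | h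
  · exact h
  · exfalso
    have h' : ‖⟪z₂ - z₃, z₁ - z₃⟫‖ = ‖z₂ - z₃‖ * ‖z₁ - z₃‖ := by
      simpa [Real.norm_eq_abs] using h
    rw [norm_inner_eq_norm_iff h2 h1] at h'
    obtain ⟨r, hr, hre⟩ := h'
    have hcol : Collinear ℝ ({z₁, z₂, z₃} : Set (EuclideanSpace ℝ (Fin 2))) := by
      apply (collinear_iff_of_mem (show z₃ ∈ ({z₁, z₂, z₃} : Set _) by simp)).2
      refine ⟨z₂ - z₃, fun p hp => ?_⟩
      rcases hp with h | h | h
      · exact ⟨r, by rw [h]; rw [sub_eq_iff_eq_add] at hre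
                     simpa [vadd_eq_add] using hre⟩
      · exact ⟨1, by simp [h, vadd_eq_add]⟩
      · exact ⟨0, by simp_all⟩
    rw [affineIndependent_iff_not_collinear_set] at htri
    exact htri (by simpa using hcol)

/-- Choice of the ratio `k`: close enough to `d₂/d₁`, the Apollonius circle is so large
that it must meet the perpendicular bisector. -/
private theorem key_k (d₁ d₂ I nu nw : ℝ) (hd₁ : 0 < d₁) (h12 : d₁ < d₂)
    (hnu : 0 < nu) (hnw : 0 < nw) (hCS : |I| < nu * nw) :
    ∃ k : ℝ, 1 < k ∧ k < d₂ / d₁ ∧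
      |d₂ ^ 2 * I - (d₂ ^ 2 - (k * d₁) ^ 2) * nu ^ 2 / 2| ≤ k * d₁ * d₂ * nw * nu := by
  have hd₂ : 0 < d₂ := hd₁.trans h12
  set ε : ℝ := d₂ ^ 2 * (nu * nw - |I|) with hεdef
  have hε : 0 < ε := mul_pos (by positivity) (by linarith)
  set δ : ℝ := min (ε / (d₂ * (nu ^ 2 + nu * nw) + 1)) ((d₂ - d₁) / 2) with hδdef
  have hden : 0 < d₂ * (nu ^ 2 + nu * nw) + 1 := by positivity
  have hδ0 : 0 < δ := lt_min (by positivity) (by linarith)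
  have hδ1 : δ ≤ (d₂ - d₁) / 2 := min_le_right _ _
  have hδ2 : δ * (d₂ * (nu ^ 2 + nu * nw) + 1) ≤ ε := by
    have := min_le_left (ε / (d₂ * (nu ^ 2 + nu * nw) + 1)) ((d₂ - d₁) / 2)
    rw [← hδdef] at this
    calc δ * (d₂ * (nu ^ 2 + nu * nw) + 1)
        ≤ ε / (d₂ * (nu ^ 2 + nu * nw) + 1) * (d₂ * (nu ^ 2 + nu * nw) + 1) :=
          mul_le_mul_of_nonneg_right this hden.le
      _ = ε := div_mul_cancel₀ _ (ne_of_gt hden)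
  have hδd₂ : δ < d₂ := by linarith
  refine ⟨(d₂ - δ) / d₁, ?_, ?_, ?_⟩
  · rw [lt_div_iff₀ hd₁]; linarith
  · rw [div_lt_div_iff₀ hd₁ hd₁]; nlinarith
  · have hkd : (d₂ - δ) / d₁ * d₁ = d₂ - δ := div_mul_cancel₀ _ (ne_of_gt hd₁)
    rw [hkd]
    rw [abs_le]
    constructor <;>
      nlinarith [le_abs_self I, neg_abs_le I, hδ2, hδ0, hδd₂, hε, sq_nonneg nu,
        mul_nonneg (mul_nonneg hδ0.le (by linarith : (0:ℝ) ≤ 4 * d₂ - δ)) (sq_nonneg nu),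
        mul_pos hnu hnw, abs_nonneg I, sq_nonneg (δ * nu),
        mul_nonneg (mul_nonneg hδ0.le (by linarith : (0:ℝ) ≤ d₂ - δ)) (sq_nonneg nu)]

/-- If the Apollonius circle for the ratio `e : f` on the segment `z₁z₃` meets the
perpendicular bisector of `z₂z₃`, there is a point realizing both metric relations. -/
private theorem exists_point (z₁ z₂ z₃ : EuclideanSpace ℝ (Fin 2)) (e f : ℝ)
    (he : 0 < e) (hef : e < f) (hu : z₂ - z₃ ≠ 0)
    (hle : |⟪z₂ - z₃, ((f ^ 2 / (f ^ 2 - e ^ 2)) • z₁ + (e ^ 2 / (e ^ 2 - f ^ 2)) • z₃)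
              - (2 : ℝ)⁻¹ • (z₂ + z₃)⟫| / ‖z₂ - z₃‖
            ≤ e * f * ‖z₁ - z₃‖ / (f ^ 2 - e ^ 2)) :
    ∃ x : EuclideanSpace ℝ (Fin 2),
      ‖x - z₃‖ = ‖x - z₂‖ ∧ ‖x - z₁‖ * f = ‖x - z₃‖ * e := by
  have hs : (0:ℝ) < f ^ 2 - e ^ 2 := by nlinarith
  set u : EuclideanSpace ℝ (Fin 2) := z₂ - z₃ with hudef
  set b : EuclideanSpace ℝ (Fin 2) :=
    (f ^ 2 / (f ^ 2 - e ^ 2)) • z₁ + (e ^ 2 / (e ^ 2 - f ^ 2)) • z₃ with hbdef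
  set A : ℝ := ⟪u, b - (2 : ℝ)⁻¹ • (z₂ + z₃)⟫ with hAdef
  set r : ℝ := e * f * ‖z₁ - z₃‖ / (f ^ 2 - e ^ 2) with hrdef
  have hun : 0 < ‖u‖ := norm_pos_iff.2 hu
  have hNN : ⟪u, u⟫ = ‖u‖ ^ 2 := real_inner_self_eq_norm_sq u
  set v : EuclideanSpace ℝ (Fin 2) := (WithLp.equiv 2 (Fin 2 → ℝ)).symm ![-(u 1), u 0] with hvdef
  have hperp : ⟪u, v⟫ = 0 := by
    simp [hvdef, PiLp.inner_apply, Fin.sum_univ_two, RCLike.inner_apply,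
      WithLp.equiv_symm_apply]
    ring
  have hvn : ‖v‖ = ‖u‖ := by
    rw [hvdef, EuclideanSpace.norm_eq, EuclideanSpace.norm_eq]
    simp [Fin.sum_univ_two, WithLp.equiv_symm_apply]
    ring_nf
  have h0 : 0 ≤ |A| / ‖u‖ := by positivity
  have hr0 : 0 ≤ r := le_trans h0 hle
  have hsq : (|A| / ‖u‖) ^ 2 ≤ r ^ 2 := by nlinarith
  have habs : (|A| / ‖u‖) ^ 2 = A ^ 2 / ‖u‖ ^ 2 := by rw [div_pow, sq_abs]
  set t : ℝ := Real.sqrt (r ^ 2 - (|A| / ‖u‖) ^ 2) with htdef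
  have ht2 : t ^ 2 = r ^ 2 - A ^ 2 / ‖u‖ ^ 2 := by
    rw [htdef, Real.sq_sqrt (by linarith), habs]
  set x : EuclideanSpace ℝ (Fin 2) := (b - (A / ‖u‖ ^ 2) • u) + (t / ‖u‖) • v with hxdef
  have hux : ⟪u, x - (2 : ℝ)⁻¹ • (z₂ + z₃)⟫ = 0 := by
    have hrw : x - (2 : ℝ)⁻¹ • (z₂ + z₃)
        = (b - (2 : ℝ)⁻¹ • (z₂ + z₃)) - (A / ‖u‖ ^ 2) • u + (t / ‖u‖) • v := by
      rw [hxdef]; abel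
    rw [hrw]
    simp only [inner_add_right, inner_sub_right, inner_smul_right, hperp, hNN, ← hAdef]
    field_simp
    ring
  have hxb : ‖x - b‖ ^ 2 = r ^ 2 := by
    have hrw : x - b = (t / ‖u‖) • v - (A / ‖u‖ ^ 2) • u := by rw [hxdef]; abel
    rw [hrw, ← real_inner_self_eq_norm_sq]
    simp only [inner_sub_left, inner_sub_right, inner_smul_left, inner_smul_right,
      conj_trivial]
    have hperp' : ⟪v, u⟫ = 0 := by rw [real_inner_comm]; exact hperp
    rw [hperp, hperp', hNN, real_inner_self_eq_norm_sq v, hvn]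
    have h4 : t ^ 2 * ‖u‖ ^ 2 = r ^ 2 * ‖u‖ ^ 2 - A ^ 2 := by
      rw [ht2]; field_simp
    field_simp
    linear_combination ‖u‖ * h4
  have h23 : ‖x - z₃‖ = ‖x - z₂‖ := by
    have hkey : ‖x - z₂‖ ^ 2 - ‖x - z₃‖ ^ 2 = -2 * ⟪u, x - (2 : ℝ)⁻¹ • (z₂ + z₃)⟫ := by
      simp only [← real_inner_self_eq_norm_sq, hudef, inner_sub_left, inner_sub_right,
        inner_smul_right, inner_add_right]
      rw [real_inner_comm z₂ x, real_inner_comm z₃ x, real_inner_comm z₃ z₂]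
      ring
    rw [hux] at hkey
    exact (eq_of_sq_eq_sq' _ _ (norm_nonneg _) (norm_nonneg _) (by linarith)).symm
  have hid := apollo_id z₁ z₃ x (e ^ 2) (f ^ 2) (ne_of_gt hs)
  rw [← hbdef, hxb] at hid
  have hr2 : (f ^ 2 - e ^ 2) * r ^ 2 = (e ^ 2 * f ^ 2 / (f ^ 2 - e ^ 2)) * ‖z₁ - z₃‖ ^ 2 := by
    rw [hrdef]; field_simp
  have hfe : f ^ 2 * ‖x - z₁‖ ^ 2 = e ^ 2 * ‖x - z₃‖ ^ 2 := by linarith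
  refine ⟨x, h23, eq_of_sq_eq_sq' _ _ (mul_nonneg (norm_nonneg _) (by linarith))
    (mul_nonneg (norm_nonneg _) he.le) ?_⟩
  linear_combination hfe

/-- Theorem 2 of the paper: case `d₃ = d₂ > d₁`. If `D(1) > 0`, there is
`k ∈ (1, d₂/d₁)` with `D(k) ≤ 0`, and consequently a point `x` on both the
perpendicular bisector of `z₂z₃` and the Apollonius circle for ratio `k d₁ : d₃`. -/
theorem exists_k_D_nonpos
    (z₁ z₂ z₃ : EuclideanSpace ℝ (Fin 2)) (d₁ d₂ d₃ : ℝ)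
    (htri : AffineIndependent ℝ ![z₁, z₂, z₃])
    (hd₁ : 0 < d₁) (h12 : d₁ < d₂) (h32 : d₃ = d₂)
    (D : ℝ → ℝ)
    (hD : ∀ k : ℝ,
      D k = |⟪z₂ - z₃, ((d₃ ^ 2 / (d₃ ^ 2 - k ^ 2 * d₁ ^ 2)) • z₁
                + (k ^ 2 * d₁ ^ 2 / (k ^ 2 * d₁ ^ 2 - d₃ ^ 2)) • z₃)
              - (2 : ℝ)⁻¹ • (z₂ + z₃)⟫| / ‖z₂ - z₃‖
            - k * d₁ * d₃ * ‖z₁ - z₃‖ / (d₃ ^ 2 - k ^ 2 * d₁ ^ 2))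
    (hD1 : 0 < D 1) :
    ∃ k : ℝ, 1 < k ∧ k < d₂ / d₁ ∧ D k ≤ 0 ∧
      ∃ x : EuclideanSpace ℝ (Fin 2),
        ‖x - z₃‖ * d₂ = ‖x - z₂‖ * d₃ ∧
        ‖x - z₁‖ * d₃ = ‖x - z₃‖ * (k * d₁) := by
  rw [h32] at hD ⊢
  have hd₂ : 0 < d₂ := hd₁.trans h12
  have hu : z₂ - z₃ ≠ 0 := by
    have := htri.injective.ne (a₁ := 1) (a₂ := 2) (by decide)
    simpa [sub_eq_zero] using this
  have hun : 0 < ‖z₂ - z₃‖ := norm_pos_iff.2 hu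
  have hwn : 0 < ‖z₁ - z₃‖ := by
    apply norm_pos_iff.2
    have := htri.injective.ne (a₁ := 0) (a₂ := 2) (by decide)
    simpa [sub_eq_zero] using this
  have hCS := strictCS z₁ z₂ z₃ htri
  obtain ⟨k, hk1, hk2, hkb⟩ :=
    key_k d₁ d₂ ⟪z₂ - z₃, z₁ - z₃⟫ ‖z₂ - z₃‖ ‖z₁ - z₃‖ hd₁ h12 hun hwn hCS
  have hkd₁ : 0 < k * d₁ := mul_pos (lt_trans one_pos hk1) hd₁
  have hkdlt : k * d₁ < d₂ := by
    have := (lt_div_iff₀ hd₁).1 hk2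
    linarith
  have hs : 0 < d₂ ^ 2 - k ^ 2 * d₁ ^ 2 := by nlinarith
  have hs2 : k ^ 2 * d₁ ^ 2 - d₂ ^ 2 ≠ 0 := by intro h; linarith
  -- value of the inner product appearing in D
  have hA : ⟪z₂ - z₃, ((d₂ ^ 2 / (d₂ ^ 2 - k ^ 2 * d₁ ^ 2)) • z₁
        + (k ^ 2 * d₁ ^ 2 / (k ^ 2 * d₁ ^ 2 - d₂ ^ 2)) • z₃) - (2 : ℝ)⁻¹ • (z₂ + z₃)⟫
      = (d₂ ^ 2 * ⟪z₂ - z₃, z₁ - z₃⟫ - (d₂ ^ 2 - (k * d₁) ^ 2) * ‖z₂ - z₃‖ ^ 2 / 2)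
        / (d₂ ^ 2 - k ^ 2 * d₁ ^ 2) := by
    have hn : ‖z₂ - z₃‖ ^ 2 = ⟪z₂ - z₃, z₂⟫ - ⟪z₂ - z₃, z₃⟫ := by
      rw [← inner_sub_right, real_inner_self_eq_norm_sq]
    have hi : ⟪z₂ - z₃, z₁ - z₃⟫ = ⟪z₂ - z₃, z₁⟫ - ⟪z₂ - z₃, z₃⟫ := inner_sub_right _ _ _
    rw [hn, hi, eq_div_iff (ne_of_gt hs)]
    simp only [inner_sub_right, inner_add_right, inner_smul_right]
    field_simp
    ring
  have hDk : D k ≤ 0 := by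
    rw [hD k, hA]
    rw [abs_div, abs_of_pos hs, div_div]
    apply sub_nonpos.2
    rw [div_le_div_iff₀ (by positivity) hs]
    nlinarith [mul_le_mul_of_nonneg_right hkb hs.le]
  have hle' : |⟪z₂ - z₃, ((d₂ ^ 2 / (d₂ ^ 2 - (k * d₁) ^ 2)) • z₁
        + ((k * d₁) ^ 2 / ((k * d₁) ^ 2 - d₂ ^ 2)) • z₃) - (2 : ℝ)⁻¹ • (z₂ + z₃)⟫|
        / ‖z₂ - z₃‖
      ≤ (k * d₁) * d₂ * ‖z₁ - z₃‖ / (d₂ ^ 2 - (k * d₁) ^ 2) := by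
    have h' := hDk
    rw [hD k] at h'
    have h'' := sub_nonpos.1 h'
    rw [show ((k * d₁) ^ 2 : ℝ) = k ^ 2 * d₁ ^ 2 from mul_pow k d₁ 2]
    exact h''
  obtain ⟨x, hx1, hx2⟩ := exists_point z₁ z₂ z₃ (k * d₁) d₂ hkd₁ hkdlt hu hle'
  exact ⟨k, hk1, hk2, hDk, x, by rw [hx1], hx2⟩
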